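/- Let A be an irreducible deterministic complete finite automaton over an alphabet containing a letter a, and consider the functional graph of the letter a (red edges). Suppose the maximal a-level ℓ of states is positive, where the level of a state is its distance along a-edges to the nearest state lying on an a-cycle. If all states of maximal level ℓ belong to the same a-tree (the tree of the functional graph of a rooted at a single cycle state), then A has a stable pair of states. -/
import Mathlib


def dcaRun {Q A : Type*} (δ : Q → A → Q) (p : Q) (w : List A) : Q := w.foldl δ p

def Synchronizable {Q A : Type*} (δ : Q → A → Q) (p q : Q) : Prop :=
  ∃ w : List A, dcaRun δ p w = dcaRun δ q w

def StablePair {Q A : Type*} (δ : Q → A → Q) (p q : Q) : Prop :=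
  ∀ u : List A, Synchronizable δ (dcaRun δ p u) (dcaRun δ q u)

/-- `p` lies on a cycle of the functional graph of `f`. -/
def OnCycle {Q : Type*} (f : Q → Q) (p : Q) : Prop := ∃ k > 0, f^[k] p = p

/-- The level of `p`: the least number of `f`-steps needed to reach a cycle. -/
noncomputable def aLevel {Q : Type*} (f : Q → Q) (p : Q) : ℕ :=
  sInf {k | OnCycle f (f^[k] p)}

/-- The root of the tree of `p`: the first cycle state reached from `p`. -/
noncomputable def aRoot {Q : Type*} (f : Q → Q) (p : Q) : Q := f^[aLevel f p] p

section Aux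

variable {Q A : Type*}

lemma dcaRun_append (δ : Q → A → Q) (x : Q) (u v : List A) :
    dcaRun δ x (u ++ v) = dcaRun δ (dcaRun δ x u) v := List.foldl_append ..

lemma dcaRun_replicate (δ : Q → A → Q) (b : A) (x : Q) (n : ℕ) :
    dcaRun δ x (List.replicate n b) = (fun q => δ q b)^[n] x := by
  induction n generalizing x with
  | zero => rfl
  | succ m ih =>
      rw [List.replicate_succ]
      show dcaRun δ (δ x b) (List.replicate m b) = _
      rw [ih, Function.iterate_succ_apply]

lemma onCycle_iterate {f : Q → Q} {x : Q} (h : OnCycle f x) (m : ℕ) :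
    OnCycle f (f^[m] x) := by
  obtain ⟨k, hk, hfix⟩ := h
  exact ⟨k, hk, by rw [← Function.iterate_add_apply, Nat.add_comm,
    Function.iterate_add_apply, hfix]⟩

lemma level_nonempty [Finite Q] (f : Q → Q) (x : Q) :
    {k | OnCycle f (f^[k] x)}.Nonempty := by
  obtain ⟨i, j, hne, heq⟩ :=
    Finite.exists_ne_map_eq_of_infinite (fun i : ℕ => f^[i] x)
  rcases Nat.lt_or_ge i j with h | h
  · exact ⟨i, j - i, by omega, by
      rw [← Function.iterate_add_apply]
      have : j - i + i = j := by omega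
      rw [this, ← heq]⟩
  · have hlt : j < i := by omega
    exact ⟨j, i - j, by omega, by
      rw [← Function.iterate_add_apply]
      have : i - j + j = i := by omega
      rw [this, heq]⟩

lemma aLevel_onCycle [Finite Q] (f : Q → Q) (x : Q) :
    OnCycle f (f^[aLevel f x] x) := Nat.sInf_mem (level_nonempty f x)

lemma aLevel_le {f : Q → Q} {x : Q} {n : ℕ} (h : OnCycle f (f^[n] x)) :
    aLevel f x ≤ n := Nat.sInf_le h

lemma aLevel_eq_zero_of_onCycle {f : Q → Q} {x : Q} (h : OnCycle f x) :
    aLevel f x = 0 :=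
  Nat.le_zero.mp (aLevel_le (by simpa using h))

lemma onCycle_iterate_of_le [Finite Q] {f : Q → Q} {x : Q} {n : ℕ}
    (h : aLevel f x ≤ n) : OnCycle f (f^[n] x) := by
  have h1 := onCycle_iterate (aLevel_onCycle f x) (n - aLevel f x)
  rw [← Function.iterate_add_apply] at h1
  have : n - aLevel f x + aLevel f x = n := by omega
  rwa [this] at h1

lemma aLevel_iterate [Finite Q] {f : Q → Q} {x : Q} {j : ℕ}
    (h : j ≤ aLevel f x) : aLevel f (f^[j] x) = aLevel f x - j := by
  apply le_antisymm
  · apply aLevel_le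
    rw [← Function.iterate_add_apply]
    have : aLevel f x - j + j = aLevel f x := by omega
    rw [this]; exact aLevel_onCycle f x
  · have h1 := aLevel_onCycle f (f^[j] x)
    rw [← Function.iterate_add_apply] at h1
    have h2 : aLevel f x ≤ aLevel f (f^[j] x) + j := aLevel_le h1
    omega

lemma exists_period_N [Fintype Q] (f : Q → Q) (ℓ : ℕ) :
    ∃ N : ℕ, ℓ ≤ N ∧ 1 ≤ N ∧ ∀ x : Q, OnCycle f x → f^[N] x = x := by
  classical
  have hex : ∀ x : Q, ∃ k : ℕ, 0 < k ∧ (OnCycle f x → f^[k] x = x) := by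
    intro x
    by_cases h : OnCycle f x
    · obtain ⟨k, hk, hfix⟩ := h
      exact ⟨k, hk, fun _ => hfix⟩
    · exact ⟨1, Nat.one_pos, fun hc => absurd hc h⟩
  choose K hKpos hKfix using hex
  have hMpos : 0 < ∏ x : Q, K x := Finset.prod_pos (fun x _ => hKpos x)
  refine ⟨(ℓ + 1) * ∏ x : Q, K x, ?_, ?_, ?_⟩
  · calc ℓ ≤ (ℓ + 1) * 1 := by omega
    _ ≤ (ℓ + 1) * ∏ x : Q, K x := Nat.mul_le_mul_left _ hMpos
  · calc 1 ≤ (ℓ + 1) * 1 := by omega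
    _ ≤ (ℓ + 1) * ∏ x : Q, K x := Nat.mul_le_mul_left _ hMpos
  · intro x hx
    have hdvd : K x ∣ (ℓ + 1) * ∏ x : Q, K x :=
      Dvd.dvd.mul_left (Finset.dvd_prod_of_mem K (Finset.mem_univ x)) _
    obtain ⟨t, ht⟩ := hdvd
    rw [ht, Function.iterate_mul]
    exact Function.IsFixedPt.iterate (hKfix x hx) t

variable [Fintype Q] [DecidableEq Q]

def wordImg (δ : Q → A → Q) (w : List A) : Finset Q :=
  Finset.univ.image (fun x => dcaRun δ x w)

lemma dcaRun_mem_wordImg (δ : Q → A → Q) (q : Q) (w : List A) :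
    dcaRun δ q w ∈ wordImg δ w :=
  Finset.mem_image_of_mem _ (Finset.mem_univ q)

lemma wordImg_append (δ : Q → A → Q) (u v : List A) :
    wordImg δ (u ++ v) = (wordImg δ u).image (fun x => dcaRun δ x v) := by
  unfold wordImg
  rw [Finset.image_image]
  apply Finset.image_congr
  intro x _
  exact dcaRun_append δ x u v

lemma wordImg_append_card_le_left (δ : Q → A → Q) (u v : List A) :
    (wordImg δ (u ++ v)).card ≤ (wordImg δ u).card := by
  rw [wordImg_append]; exact Finset.card_image_le

lemma wordImg_append_card_le_right (δ : Q → A → Q) (u v : List A) :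
    (wordImg δ (u ++ v)).card ≤ (wordImg δ v).card := by
  rw [wordImg_append]
  exact Finset.card_le_card
    (Finset.image_subset_image (Finset.subset_univ _))

end Aux

/-- Trahtman's key lemma: in an irreducible automaton of positive level, if all
states of maximal level belong to the same tree of the functional graph of the
letter `a`, then the automaton has a stable pair. -/
theorem stablePair_of_maximal_states_same_tree
    {Q A : Type*} [Fintype Q] (δ : Q → A → Q) (a : A)
    (hirr : ∀ p q : Q, ∃ w : List A, dcaRun δ p w = q)
    (ℓ : ℕ) (hpos : 0 < ℓ)
    (hub : ∀ p : Q, aLevel (fun q => δ q a) p ≤ ℓ)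
    (hmax : ∃ p : Q, aLevel (fun q => δ q a) p = ℓ)
    (htree : ∃ r : Q, ∀ p : Q, aLevel (fun q => δ q a) p = ℓ →
        aRoot (fun q => δ q a) p = r) :
    ∃ s t : Q, s ≠ t ∧ StablePair δ s t := by
  classical
  set f : Q → Q := fun q => δ q a with hf
  obtain ⟨p, hp⟩ := hmax
  obtain ⟨r, hr⟩ := htree
  have hroot : f^[ℓ] p = r := by
    have h := hr p hp
    rw [aRoot, hp] at h
    exact h
  have hrcyc : OnCycle f r := by
    rw [← hroot]
    have h := aLevel_onCycle f p
    rwa [hp] at h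
  obtain ⟨N, hNℓ, hN1, hfix⟩ := exists_period_N f ℓ
  -- the two states of the stable pair
  set s : Q := f^[ℓ - 1] p with hs
  set c : Q := f^[N - 1] r with hc
  have hccyc : OnCycle f c := onCycle_iterate hrcyc (N - 1)
  have hslev : aLevel f s = 1 := by
    rw [hs, aLevel_iterate (by omega : ℓ - 1 ≤ aLevel f p), hp]
    omega
  have hsc : s ≠ c := by
    intro h
    have h0 : aLevel f c = 0 := aLevel_eq_zero_of_onCycle hccyc
    rw [← h, hslev] at h0
    exact one_ne_zero h0
  have hNs : f^[N] s = c := by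
    rw [hs, ← Function.iterate_add_apply]
    have he : N + (ℓ - 1) = (N - 1) + ℓ := by omega
    rw [he, Function.iterate_add_apply, hroot, hc]
  -- minimal rank machinery
  set k : ℕ := sInf {n | ∃ w : List A, (wordImg δ w).card = n} with hkdef
  have hkmem : ∃ w : List A, (wordImg δ w).card = k :=
    Nat.sInf_mem (⟨(wordImg δ ([] : List A)).card, ⟨[], rfl⟩⟩ :
      Set.Nonempty {n | ∃ w : List A, (wordImg δ w).card = n})
  obtain ⟨w₀, hw₀⟩ := hkmem
  have hk_le : ∀ w : List A, k ≤ (wordImg δ w).card := fun w =>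
    Nat.sInf_le ⟨w, rfl⟩
  have hk_all : ∀ u : List A, (wordImg δ (u ++ w₀)).card = k := by
    intro u
    exact le_antisymm
      (by calc (wordImg δ (u ++ w₀)).card ≤ (wordImg δ w₀).card :=
            wordImg_append_card_le_right δ u w₀
          _ = k := hw₀)
      (hk_le _)
  -- the key property: every extension of a minimal-rank word merges s and c
  have key : ∀ u : List A, dcaRun δ s (u ++ w₀) = dcaRun δ c (u ++ w₀) := by
    rcases le_or_gt k 1 with hk1 | hk2
    · intro u
      have hcard : (wordImg δ (u ++ w₀)).card ≤ 1 := by rw [hk_all u]; exact hk1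
      exact Finset.card_le_one.mp hcard _ (dcaRun_mem_wordImg δ s _) _
        (dcaRun_mem_wordImg δ c _)
    · -- build the minimal image D = {s} ∪ D₀ with D₀ consisting of cycle states
      obtain ⟨v₁, hv₁⟩ := hirr (dcaRun δ p w₀) r
      set ω₁ : List A := w₀ ++ v₁ with hω₁
      have hrω₁ : dcaRun δ p ω₁ = r := by rw [hω₁, dcaRun_append, hv₁]
      have hPcard : (wordImg δ ω₁).card = k :=
        le_antisymm (by calc (wordImg δ ω₁).card ≤ (wordImg δ w₀).card :=
              wordImg_append_card_le_left δ w₀ v₁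
            _ = k := hw₀) (hk_le _)
      have hrP : r ∈ wordImg δ ω₁ := hrω₁ ▸ dcaRun_mem_wordImg δ p ω₁
      obtain ⟨y, hyP, hyr⟩ := Finset.exists_mem_ne
        (by rw [hPcard]; exact hk2) r
      obtain ⟨v₂, hv₂⟩ := hirr y p
      set ω₂ : List A := ω₁ ++ v₂ with hω₂
      have hP'card : (wordImg δ ω₂).card = k :=
        le_antisymm (by calc (wordImg δ ω₂).card ≤ (wordImg δ ω₁).card :=
              wordImg_append_card_le_left δ ω₁ v₂
            _ = k := hPcard) (hk_le _)
      have hpP' : p ∈ wordImg δ ω₂ := by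
        rw [hω₂, wordImg_append]
        exact hv₂ ▸ Finset.mem_image_of_mem _ hyP
      -- every other state in the minimal image containing p has level < ℓ
      have hlev' : ∀ z ∈ wordImg δ ω₂, z ≠ p → aLevel f z ≤ ℓ - 1 := by
        intro z hz hzp
        by_contra hcon
        have hzℓ : aLevel f z = ℓ := le_antisymm (hub z) (by omega)
        have hrz : f^[ℓ] z = r := by
          have h := hr z hzℓ
          rwa [aRoot, hzℓ] at h
        have himg : ((wordImg δ ω₂).image
            (fun x => dcaRun δ x (List.replicate ℓ a))).card
            = (wordImg δ ω₂).card := by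
          rw [← wordImg_append, hP'card]
          exact le_antisymm (by calc (wordImg δ (ω₂ ++ List.replicate ℓ a)).card
                ≤ (wordImg δ ω₂).card := wordImg_append_card_le_left δ _ _
              _ = k := hP'card) (hk_le _)
        have hinj := Finset.injOn_of_card_image_eq himg
        apply hzp
        apply hinj hz hpP'
        show dcaRun δ z (List.replicate ℓ a) = dcaRun δ p (List.replicate ℓ a)
        rw [dcaRun_replicate, dcaRun_replicate, ← hf, hrz, hroot]
      set ω₃ : List A := ω₂ ++ List.replicate (ℓ - 1) a with hω₃
      set D : Finset Q := wordImg δ ω₃ with hD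
      have hDimg : D = (wordImg δ ω₂).image (fun x => f^[ℓ - 1] x) := by
        rw [hD, hω₃, wordImg_append]
        apply Finset.image_congr
        intro x _
        show dcaRun δ x (List.replicate (ℓ - 1) a) = f^[ℓ - 1] x
        rw [dcaRun_replicate]
      have hDcard : D.card = k :=
        le_antisymm (by calc D.card ≤ (wordImg δ ω₂).card :=
              wordImg_append_card_le_left δ ω₂ _
            _ = k := hP'card) (hk_le _)
      have hsD : s ∈ D := by
        rw [hDimg]
        exact hs ▸ Finset.mem_image_of_mem _ hpP'
      have hDsplit : ∀ d ∈ D, d = s ∨ OnCycle f d := by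
        intro d hd
        rw [hDimg] at hd
        obtain ⟨z, hz, rfl⟩ := Finset.mem_image.mp hd
        by_cases hzp : z = p
        · left; rw [hzp, hs]
        · right
          exact onCycle_iterate_of_le (hlev' z hz hzp)
      set D₀ : Finset Q := D.erase s with hD₀
      have hD₀card : D₀.card = k - 1 := by rw [hD₀, Finset.card_erase_of_mem hsD, hDcard]
      have hD₀cyc : ∀ d ∈ D₀, OnCycle f d := by
        intro d hd
        rcases hDsplit d (Finset.mem_of_mem_erase hd) with h | h
        · exact absurd h (Finset.ne_of_mem_erase hd)
        · exact h
      have hDins : D = insert s D₀ := by rw [hD₀, Finset.insert_erase hsD]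
      -- D' = image of D under a^N equals {c} ∪ D₀
      set ω₄ : List A := ω₃ ++ List.replicate N a with hω₄
      have hD'img : wordImg δ ω₄ = D.image (fun x => f^[N] x) := by
        rw [hω₄, wordImg_append, hD]
        apply Finset.image_congr
        intro x _
        show dcaRun δ x (List.replicate N a) = f^[N] x
        rw [dcaRun_replicate]
      have hD'card : (wordImg δ ω₄).card = k :=
        le_antisymm (by calc (wordImg δ ω₄).card ≤ D.card :=
              hD ▸ wordImg_append_card_le_left δ ω₃ _
            _ = k := hDcard) (hk_le _)
      have hD'eq : wordImg δ ω₄ = insert c D₀ := by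
        rw [hD'img, hDins, Finset.image_insert, hNs]
        congr 1
        calc D₀.image (fun x => f^[N] x) = D₀.image id :=
              Finset.image_congr (fun d hd => hfix d (hD₀cyc d hd))
          _ = D₀ := Finset.image_id
      -- now the punchline
      intro u
      set w : List A := u ++ w₀ with hwdef
      have hTcard : (wordImg δ w).card = k := hk_all u
      -- D.image (run · w) = wordImg w
      have hDw : D.image (fun x => dcaRun δ x w) = wordImg δ w := by
        apply Finset.eq_of_subset_of_card_le
        · rw [hD]
          unfold wordImg
          rw [Finset.image_image]
          apply Finset.image_subset_iff.mpr
          intro x _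
          exact Finset.mem_image_of_mem _ (Finset.mem_univ _)
        · rw [hTcard, hD, ← wordImg_append]
          exact hk_le _
      have hD'w : (insert c D₀).image (fun x => dcaRun δ x w) = wordImg δ w := by
        rw [← hD'eq]
        apply Finset.eq_of_subset_of_card_le
        · unfold wordImg
          rw [Finset.image_image]
          apply Finset.image_subset_iff.mpr
          intro x _
          exact Finset.mem_image_of_mem _ (Finset.mem_univ _)
        · rw [hTcard, ← wordImg_append]
          exact hk_le _
      rw [hDins] at hDw
      rw [Finset.image_insert] at hDw hD'w
      set B : Finset Q := D₀.image (fun x => dcaRun δ x w) with hB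
      have hBcard : B.card ≤ k - 1 := by
        rw [hB, ← hD₀card]
        exact Finset.card_image_le
      have hswB : dcaRun δ s w ∉ B := by
        intro hmem
        have : insert (dcaRun δ s w) B = B := Finset.insert_eq_self.mpr hmem
        rw [this] at hDw
        rw [← hDw] at hTcard
        omega
      have hsmem : dcaRun δ s w ∈ insert (dcaRun δ c w) B := by
        rw [hD'w, ← hDw]
        exact Finset.mem_insert_self _ _
      rcases Finset.mem_insert.mp hsmem with h | h
      · exact h
      · exact absurd h hswB
  refine ⟨s, c, hsc, ?_⟩
  intro u
  exact ⟨w₀, by rw [← dcaRun_append, ← dcaRun_append]; exact key u⟩
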